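/- arXiv:2206.10812 — 2 statements merged into one kernel-verified Lean document; each statement's English description precedes it below -/
import Mathlib

section
/- For every x ∈ ℝ^q, the expectation of the self-normalized ratio converges to G(x): lim_{N→∞} E[ (∑_{i=1}^N (g(X_i)/f(X_i)) · 1_{R(x)}(X_i)) / (∑_{i=1}^N g(X_i)/f(X_i)) ] = ∫_{R(x)} g(z) dz. -/
open MeasureTheory ProbabilityTheory Filter Set

lemma aux_transfer {q : ℕ} {Ω : Type} [MeasurableSpace Ω] (P : Measure Ω)
    (X0 : Ω → (Fin q → ℝ)) (hX : Measurable X0) (f : (Fin q → ℝ) → ℝ)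
    (hfm : Measurable f) (hf0 : ∀ z, 0 ≤ f z)
    (hlaw : Measure.map X0 P
      = (volume : Measure (Fin q → ℝ)).withDensity fun z => ENNReal.ofReal (f z))
    (φ ψ : (Fin q → ℝ) → ℝ) (hφm : Measurable φ) (hψ : Integrable ψ)
    (hmul : ∀ z, f z * φ z = ψ z) :
    Integrable (fun ω => φ (X0 ω)) P ∧ ∫ ω, φ (X0 ω) ∂P = ∫ z, ψ z := by
  have hnn : Measurable fun z => (f z).toNNReal := hfm.real_toNNReal
  have hofreal : (fun z => ENNReal.ofReal (f z))
      = fun z => ((f z).toNNReal : ENNReal) := rfl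
  have hsmul : (fun z => (f z).toNNReal • φ z) = ψ := by
    funext z
    simp only [NNReal.smul_def, smul_eq_mul, Real.coe_toNNReal _ (hf0 z)]
    exact hmul z
  have hint : Integrable φ (Measure.map X0 P) := by
    rw [hlaw, hofreal, integrable_withDensity_iff_integrable_smul hnn, hsmul]
    exact hψ
  constructor
  · exact (integrable_map_measure hφm.aestronglyMeasurable hX.aemeasurable).mp hint
  · rw [← integral_map hX.aemeasurable hφm.aestronglyMeasurable, hlaw, hofreal,
      integral_withDensity_eq_integral_smul hnn, hsmul]

lemma aux_div_div (a b : ℝ) {c : ℝ} (hc : c ≠ 0) : a / c / (b / c) = a / b := by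
  rcases eq_or_ne b 0 with rfl | hb
  · simp
  · field_simp

/-- For every `x ∈ ℝ^q`, the expectation of the self-normalized ratio converges
to `G(x)`:
`lim_{N→∞} E[ (∑_{i=1}^N (g(X_i)/f(X_i)) · 1_{R(x)}(X_i)) / (∑_{i=1}^N g(X_i)/f(X_i)) ]
  = ∫_{R(x)} g(z) dz`. -/
theorem stmt_5
    {q : ℕ} (hq : 1 ≤ q)
    {Ω : Type} [MeasurableSpace Ω] (P : Measure Ω) [IsProbabilityMeasure P]
    (X : ℕ → Ω → (Fin q → ℝ))
    (hXmeas : ∀ i, Measurable (X i))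
    (hindep : iIndepFun X P)
    (f g : (Fin q → ℝ) → ℝ)
    (hfm : Measurable f) (hgm : Measurable g)
    (hf0 : ∀ z, 0 ≤ f z) (hg0 : ∀ z, 0 ≤ g z)
    (hfint : ∫ z, f z = 1) (hgint : ∫ z, g z = 1)
    (hlaw : ∀ i, Measure.map (X i) P
      = (volume : Measure (Fin q → ℝ)).withDensity fun z => ENNReal.ofReal (f z))
    (hsupp : ∀ z, 0 < g z → 0 < f z)
    (x : Fin q → ℝ) :
    Tendsto
      (fun N : ℕ => ∫ ω,
        (∑ i ∈ Finset.range N, Set.indicator (Set.Iic x) (fun z => g z / f z) (X i ω))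
          / (∑ i ∈ Finset.range N, g (X i ω) / f (X i ω)) ∂P)
      atTop (nhds (∫ z in Set.Iic x, g z)) := by
  -- basic facts
  have hgInt : Integrable g := by
    by_contra h
    rw [integral_undef h] at hgint
    norm_num at hgint
  have hmul : ∀ z, f z * (g z / f z) = g z := by
    intro z
    rcases eq_or_lt_of_le (hf0 z) with hz | hz
    · have hgz : g z = 0 := by
        by_contra hgz
        have h := hsupp z (lt_of_le_of_ne (hg0 z) (Ne.symm hgz))
        rw [← hz] at h
        exact lt_irrefl 0 h
      rw [← hz, hgz]
      ring
    · field_simp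
  -- the two test functions
  set φ : (Fin q → ℝ) → ℝ := Set.indicator (Set.Iic x) (fun z => g z / f z) with hφdef
  set ψ : (Fin q → ℝ) → ℝ := fun z => g z / f z with hψdef
  have hφm : Measurable φ := (hgm.div hfm).indicator measurableSet_Iic
  have hψm : Measurable ψ := hgm.div hfm
  have hmulφ : ∀ z, f z * φ z = Set.indicator (Set.Iic x) g z := by
    intro z
    by_cases hz : z ∈ Set.Iic x
    · simp [hφdef, hψdef, Set.indicator_of_mem hz, hmul z]
    · simp [hφdef, Set.indicator_of_notMem hz]
  have hA := aux_transfer P (X 0) (hXmeas 0) f hfm hf0 (hlaw 0) φ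
    (Set.indicator (Set.Iic x) g) hφm (hgInt.indicator measurableSet_Iic) hmulφ
  have hB := aux_transfer P (X 0) (hXmeas 0) f hfm hf0 (hlaw 0) ψ g hψm hgInt hmul
  -- ident distrib / independence
  have hid : ∀ i, IdentDistrib (X i) (X 0) P P := fun i =>
    ⟨(hXmeas i).aemeasurable, (hXmeas 0).aemeasurable, by rw [hlaw i, hlaw 0]⟩
  have hpairφ : Pairwise (Function.onFun (IndepFun · · P) fun i ω => φ (X i ω)) := fun i j hij =>
    (hindep.indepFun hij).comp hφm hφm
  have hpairψ : Pairwise (Function.onFun (IndepFun · · P) fun i ω => ψ (X i ω)) := fun i j hij =>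
    (hindep.indepFun hij).comp hψm hψm
  have hidφ : ∀ i, IdentDistrib (fun ω => φ (X i ω)) (fun ω => φ (X 0 ω)) P P :=
    fun i => (hid i).comp hφm
  have hidψ : ∀ i, IdentDistrib (fun ω => ψ (X i ω)) (fun ω => ψ (X 0 ω)) P P :=
    fun i => (hid i).comp hψm
  have hslawφ := strong_law_ae_real (fun i ω => φ (X i ω)) hA.1 hpairφ hidφ
  have hslawψ := strong_law_ae_real (fun i ω => ψ (X i ω)) hB.1 hpairψ hidψ
  have hEφ : ∫ ω, φ (X 0 ω) ∂P = ∫ z in Set.Iic x, g z := by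
    rw [hA.2, integral_indicator measurableSet_Iic]
  have hEψ : ∫ ω, ψ (X 0 ω) ∂P = 1 := by rw [hB.2, hgint]
  rw [hEφ] at hslawφ
  rw [hEψ] at hslawψ
  -- a.e. convergence of the ratio
  have hae : ∀ᵐ ω ∂P, Tendsto (fun N : ℕ =>
      (∑ i ∈ Finset.range N, φ (X i ω)) / (∑ i ∈ Finset.range N, ψ (X i ω)))
      atTop (nhds (∫ z in Set.Iic x, g z)) := by
    filter_upwards [hslawφ, hslawψ] with ω h1 h2
    have h3 := h1.div h2 one_ne_zero
    rw [div_one] at h3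
    apply h3.congr'
    filter_upwards [eventually_ge_atTop 1] with N hN
    exact aux_div_div _ _ (by positivity : (N : ℝ) ≠ 0)
  -- dominated convergence
  have hnn_φ : ∀ z, 0 ≤ φ z :=
    fun z => Set.indicator_nonneg (fun y _ => div_nonneg (hg0 y) (hf0 y)) z
  have hφ_le_ψ : ∀ z, φ z ≤ ψ z :=
    fun z => Set.indicator_le_self' (fun y _ => div_nonneg (hg0 y) (hf0 y)) z
  have hnn_ψ : ∀ z, 0 ≤ ψ z := fun z => div_nonneg (hg0 z) (hf0 z)
  have hDCT := tendsto_integral_of_dominated_convergence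
      (F := fun N ω => (∑ i ∈ Finset.range N, φ (X i ω)) / ∑ i ∈ Finset.range N, ψ (X i ω))
      (f := fun _ : Ω => ∫ z in Set.Iic x, g z) (fun _ => (1 : ℝ))
    (fun N => ((Finset.measurable_sum _ fun i _ => hφm.comp (hXmeas i)).div
      (Finset.measurable_sum _ fun i _ => hψm.comp (hXmeas i))).aestronglyMeasurable)
    (integrable_const 1)
    (fun N => Filter.Eventually.of_forall fun ω => by
      have h1 : (0:ℝ) ≤ ∑ i ∈ Finset.range N, φ (X i ω) :=
        Finset.sum_nonneg fun i _ => hnn_φ _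
      have h2 : (0:ℝ) ≤ ∑ i ∈ Finset.range N, ψ (X i ω) :=
        Finset.sum_nonneg fun i _ => hnn_ψ _
      have h3 : (∑ i ∈ Finset.range N, φ (X i ω)) ≤ ∑ i ∈ Finset.range N, ψ (X i ω) :=
        Finset.sum_le_sum fun i _ => hφ_le_ψ _
      show ‖(∑ i ∈ Finset.range N, φ (X i ω)) / ∑ i ∈ Finset.range N, ψ (X i ω)‖ ≤ 1
      rw [Real.norm_eq_abs, abs_of_nonneg (div_nonneg h1 h2)]
      exact div_le_one_of_le₀ h3 h2)
    hae
  simpa using hDCT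
end

section
/- Assume sup_{z ∈ S} g(z)/f(z) < ∞ and fix n ≥ 2 and x ∈ ℝ^q. For each N, let Z_N^1, …, Z_N^{n−1} be arbitrary S-valued random vectors on the same probability space. Then, almost surely as N → ∞, (∑_{j=1}^N (g(X_j)/f(X_j)) 1_{R(x)}(X_j) − ∑_{j=1}^{n−1} (g(Z_N^j)/f(Z_N^j)) 1_{R(x)}(Z_N^j)) / (∑_{j=1}^N g(X_j)/f(X_j) − ∑_{j=1}^{n−1} g(Z_N^j)/f(Z_N^j)) → ∫_{R(x)} g(z) dz = G(x). -/
open MeasureTheory ProbabilityTheory Filter Set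
open scoped NNReal ENNReal

lemma myslln7
    {q : ℕ}
    {Ω : Type} [MeasurableSpace Ω] (P : Measure Ω) [IsProbabilityMeasure P]
    (X : ℕ → Ω → (Fin q → ℝ))
    (hXmeas : ∀ i, Measurable (X i))
    (hindep : iIndepFun X P)
    (hlawsame : ∀ i, Measure.map (X i) P = Measure.map (X 0) P)
    (h : (Fin q → ℝ) → ℝ) (hh : Measurable h) (C : ℝ) (hbd : ∀ z, |h z| ≤ C) :
    ∀ᵐ ω ∂P, Tendsto (fun N : ℕ => (∑ j ∈ Finset.range N, h (X j ω)) / N)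
      atTop (nhds (∫ ω, h (X 0 ω) ∂P)) := by
  have hint : Integrable (fun ω => h (X 0 ω)) P := by
    apply MeasureTheory.Integrable.mono' (integrable_const C)
      (hh.comp (hXmeas 0)).aestronglyMeasurable
    exact Filter.Eventually.of_forall fun ω => hbd _
  have hpind : Pairwise (Function.onFun (IndepFun · · P) fun i ω => h (X i ω)) := by
    intro i j hij
    exact (hindep.comp (fun _ => h) (fun _ => hh)).indepFun hij
  have hident : ∀ i, IdentDistrib (fun ω => h (X i ω)) (fun ω => h (X 0 ω)) P P := by
    intro i
    refine ⟨(hh.comp (hXmeas i)).aemeasurable, (hh.comp (hXmeas 0)).aemeasurable, ?_⟩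
    calc Measure.map (fun ω => h (X i ω)) P = (Measure.map (X i) P).map h := by
          rw [Measure.map_map hh (hXmeas i)]; rfl
      _ = (Measure.map (X 0) P).map h := by rw [hlawsame i]
      _ = Measure.map (fun ω => h (X 0 ω)) P := by
          rw [Measure.map_map hh (hXmeas 0)]; rfl
  exact strong_law_ae_real (fun i ω => h (X i ω)) hint hpind hident

/-- expectation of `h (X 0)` when the law of `X 0` has density `f`. -/
lemma myexp7
    {q : ℕ}
    {Ω : Type} [MeasurableSpace Ω] (P : Measure Ω) [IsProbabilityMeasure P]
    (X0 : Ω → (Fin q → ℝ)) (hX0 : Measurable X0)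
    (f : (Fin q → ℝ) → ℝ) (hfm : Measurable f) (hf0 : ∀ z, 0 ≤ f z)
    (hlaw : Measure.map X0 P
      = (volume : Measure (Fin q → ℝ)).withDensity fun z => ENNReal.ofReal (f z))
    (h : (Fin q → ℝ) → ℝ) (hh : Measurable h) :
    ∫ ω, h (X0 ω) ∂P = ∫ z, f z * h z := by
  have h1 : ∫ ω, h (X0 ω) ∂P = ∫ z, h z ∂(Measure.map X0 P) :=
    (integral_map hX0.aemeasurable hh.aestronglyMeasurable).symm
  rw [h1, hlaw]
  have h2 : (fun z => ENNReal.ofReal (f z))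
      = fun z => (((f z).toNNReal : ℝ≥0) : ℝ≥0∞) := rfl
  rw [h2, integral_withDensity_eq_integral_smul hfm.real_toNNReal h]
  congr 1
  ext z
  simp [NNReal.smul_def, Real.coe_toNNReal (f z) (hf0 z)]

/-- Assume `sup_{z ∈ S} g(z)/f(z) ≤ C < ∞` and fix `n ≥ 2` and `x ∈ ℝ^q`.
For each `N`, let `Z_N^1, …, Z_N^{n−1}` be arbitrary `S`-valued random vectors on the same
probability space.  Then, almost surely as `N → ∞`,
`(∑_{j=1}^N (g(X_j)/f(X_j)) 1_{R(x)}(X_j) − ∑_{j=1}^{n−1} (g(Z_N^j)/f(Z_N^j)) 1_{R(x)}(Z_N^j))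
 / (∑_{j=1}^N g(X_j)/f(X_j) − ∑_{j=1}^{n−1} g(Z_N^j)/f(Z_N^j)) → ∫_{R(x)} g(z) dz = G(x)`. -/
theorem stmt_7
    {q : ℕ} (hq : 1 ≤ q)
    {Ω : Type} [MeasurableSpace Ω] (P : Measure Ω) [IsProbabilityMeasure P]
    (X : ℕ → Ω → (Fin q → ℝ))
    (hXmeas : ∀ i, Measurable (X i))
    (hindep : iIndepFun X P)
    (f g : (Fin q → ℝ) → ℝ)
    (hfm : Measurable f) (hgm : Measurable g)
    (hf0 : ∀ z, 0 ≤ f z) (hg0 : ∀ z, 0 ≤ g z)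
    (hfint : ∫ z, f z = 1) (hgint : ∫ z, g z = 1)
    (hlaw : ∀ i, Measure.map (X i) P
      = (volume : Measure (Fin q → ℝ)).withDensity fun z => ENNReal.ofReal (f z))
    (hsupp : ∀ z, 0 < g z → 0 < f z)
    (C : ℝ) (hC : ∀ z, 0 < f z → g z / f z ≤ C)
    (n : ℕ) (hn : 2 ≤ n)
    (Z : ℕ → ℕ → Ω → (Fin q → ℝ))
    (hZS : ∀ N j ω, j < n - 1 → 0 < f (Z N j ω))
    (x : Fin q → ℝ) :
    ∀ᵐ ω ∂P, Tendsto
      (fun N : ℕ =>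
        ((∑ j ∈ Finset.range N, Set.indicator (Set.Iic x) (fun z => g z / f z) (X j ω))
          - ∑ j ∈ Finset.range (n - 1),
              Set.indicator (Set.Iic x) (fun z => g z / f z) (Z N j ω))
        / ((∑ j ∈ Finset.range N, g (X j ω) / f (X j ω))
          - ∑ j ∈ Finset.range (n - 1), g (Z N j ω) / f (Z N j ω)))
      atTop (nhds (∫ z in Set.Iic x, g z)) := by
  set w : (Fin q → ℝ) → ℝ := fun z => g z / f z with hw
  have hwm : Measurable w := hgm.div hfm
  have hw0 : ∀ z, 0 ≤ w z := fun z => div_nonneg (hg0 z) (hf0 z)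
  have hC0 : 0 ≤ C := by
    obtain ⟨z0, hz0⟩ : ∃ z0, 0 < f z0 := by
      by_contra hno
      push_neg at hno
      have : f = fun _ => (0 : ℝ) := funext fun z => le_antisymm (hno z) (hf0 z)
      rw [this] at hfint
      simp at hfint
    exact le_trans (hw0 z0) (hC z0 hz0)
  have hwC : ∀ z, w z ≤ C := by
    intro z
    rcases lt_or_eq_of_le (hf0 z) with hz | hz
    · exact hC z hz
    · have hz' : f z = 0 := hz.symm
      simp only [hw, hz', div_zero]
      exact hC0
  -- pointwise identity: f z * w z = g z
  have hfw : ∀ z, f z * w z = g z := by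
    intro z
    rcases lt_or_eq_of_le (hf0 z) with hz | hz
    · simp only [hw]; field_simp [hz.ne']
    · have hgz : g z = 0 := by
        by_contra hgz
        have := hsupp z (lt_of_le_of_ne (hg0 z) (Ne.symm hgz))
        linarith
      simp [hw, hgz, ← hz]
  set h1 : (Fin q → ℝ) → ℝ := Set.indicator (Set.Iic x) w with hh1
  have hh1m : Measurable h1 := hwm.indicator measurableSet_Iic
  have hh1bd : ∀ z, |h1 z| ≤ C := by
    intro z
    rw [abs_of_nonneg (Set.indicator_nonneg (fun z _ => hw0 z) z)]
    by_cases hz : z ∈ Set.Iic x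
    · rw [Set.indicator_of_mem hz]; exact hwC z
    · rw [Set.indicator_of_notMem hz]; exact hC0
  have hhwbd : ∀ z, |w z| ≤ C := fun z => by
    rw [abs_of_nonneg (hw0 z)]; exact hwC z
  have hlawsame : ∀ i, Measure.map (X i) P = Measure.map (X 0) P := by
    intro i; rw [hlaw i, hlaw 0]
  -- expectations
  have hexp1 : ∫ ω, h1 (X 0 ω) ∂P = ∫ z in Set.Iic x, g z := by
    rw [myexp7 P (X 0) (hXmeas 0) f hfm hf0 (hlaw 0) h1 hh1m]
    rw [← integral_indicator measurableSet_Iic]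
    congr 1
    ext z
    rw [hh1, ← Set.indicator_mul_right _ f]
    by_cases hz : z ∈ Set.Iic x
    · simp [Set.indicator_of_mem hz, hfw z]
    · simp [Set.indicator_of_notMem hz]
  have hexp2 : ∫ ω, w (X 0 ω) ∂P = 1 := by
    rw [myexp7 P (X 0) (hXmeas 0) f hfm hf0 (hlaw 0) w hwm]
    simp_rw [hfw]; exact hgint
  have slln1 := myslln7 P X hXmeas hindep hlawsame h1 hh1m C hh1bd
  have slln2 := myslln7 P X hXmeas hindep hlawsame w hwm C hhwbd
  rw [hexp1] at slln1
  rw [hexp2] at slln2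
  filter_upwards [slln1, slln2] with ω hA hD
  -- Z-terms tend to 0 after dividing by N
  have hdivone : ∀ (a c : ℝ) (N : ℕ), N ≠ 0 → a / c = (a / N) / (c / N) := by
    intro a c N hN
    have hN' : (N : ℝ) ≠ 0 := Nat.cast_ne_zero.mpr hN
    rcases eq_or_ne c 0 with hc | hc
    · simp [hc]
    · field_simp
  have hZbd : ∀ (φ : ℕ → ℕ → ℝ), (∀ N j, j < n - 1 → 0 ≤ φ N j ∧ φ N j ≤ C) →
      Tendsto (fun N : ℕ => (∑ j ∈ Finset.range (n - 1), φ N j) / N) atTop (nhds 0) := by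
    intro φ hφ
    refine squeeze_zero_norm (a := fun N : ℕ => ((n - 1 : ℕ) * C) / N) (fun N => ?_)
      (tendsto_const_div_atTop_nhds_zero_nat _)
    rw [norm_div, Real.norm_natCast]
    have hsum : ‖∑ j ∈ Finset.range (n - 1), φ N j‖ ≤ (n - 1 : ℕ) * C := by
      rw [Real.norm_eq_abs, abs_of_nonneg (Finset.sum_nonneg fun j hj =>
        (hφ N j (Finset.mem_range.mp hj)).1)]
      calc ∑ j ∈ Finset.range (n - 1), φ N j
          ≤ ∑ _j ∈ Finset.range (n - 1), C :=
            Finset.sum_le_sum fun j hj => (hφ N j (Finset.mem_range.mp hj)).2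
        _ = (n - 1 : ℕ) * C := by rw [Finset.sum_const, Finset.card_range, nsmul_eq_mul]
    rcases Nat.eq_zero_or_pos N with h0 | h0
    · simp [h0]
    · exact (div_le_div_iff_of_pos_right (by exact_mod_cast h0)).mpr hsum
  have hB := hZbd (fun N j => h1 (Z N j ω)) (fun N j hj =>
    ⟨Set.indicator_nonneg (fun z _ => hw0 z) _, (le_abs_self _).trans (hh1bd _)⟩)
  have hE := hZbd (fun N j => w (Z N j ω)) (fun N j hj => ⟨hw0 _, hwC _⟩)
  have key : Tendsto
      (fun N : ℕ =>
        ((∑ j ∈ Finset.range N, h1 (X j ω)) / N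
          - (∑ j ∈ Finset.range (n - 1), h1 (Z N j ω)) / N)
        / ((∑ j ∈ Finset.range N, w (X j ω)) / N
          - (∑ j ∈ Finset.range (n - 1), w (Z N j ω)) / N))
      atTop (nhds (((∫ z in Set.Iic x, g z) - 0) / (1 - 0))) :=
    Tendsto.div (hA.sub hB) (hD.sub hE) (by norm_num)
  rw [show ((∫ z in Set.Iic x, g z) - 0) / (1 - 0) = ∫ z in Set.Iic x, g z by norm_num] at key
  apply key.congr'
  filter_upwards [eventually_ge_atTop 1] with N hN
  rw [← sub_div, ← sub_div, ← hdivone _ _ N (by omega)]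
end
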